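/- Let n ≥ 2 and let λ_1 ≤ … ≤ λ_n be real numbers. Fix i with λ_i < λ_{i+1}, and let k ≥ 1 be the number of indices j with λ_j = λ_i. Then for every ξ ∈ ℝ^n the polynomial (λ_i − t)^{k−1} divides I_ξ(t), and the quotient polynomial Î_ξ(t) = I_ξ(t)/(λ_i − t)^{k−1} satisfies Î_ξ(λ_i) = ( ∏_{l : λ_l ≠ λ_i} (λ_l − λ_i) ) · Σ_{j : λ_j = λ_i} ξ_j². In particular ξ ↦ Î_ξ(λ_i) is a quadratic form on ℝ^n which is not identically zero. -/

import Mathlib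

open Polynomial

/-- `Π_i(t) = ∏_{j ≠ i} (λ_j − t)` as a real polynomial in `t`. -/
noncomputable def PiPoly (n : ℕ) (lam : Fin n → ℝ) (i : Fin n) : Polynomial ℝ :=
  ∏ j ∈ Finset.univ.erase i, (C (lam j) - X)

/-- `I_ξ(t) = Σ_{i=1}^n ξ_i² Π_i(t)` as a real polynomial in `t`. -/
noncomputable def IPoly (n : ℕ) (lam : Fin n → ℝ) (ξ : Fin n → ℝ) : Polynomial ℝ :=
  ∑ i, C ((ξ i) ^ 2) * PiPoly n lam i

theorem stmt6 (n : ℕ) (hn : 2 ≤ n) (lam : Fin n → ℝ) (hlam : Monotone lam)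
    (i : ℕ) (hi : i + 1 < n) (hlt : lam ⟨i, by omega⟩ < lam ⟨i + 1, hi⟩)
    (k : ℕ)
    (hk : k = (Finset.univ.filter (fun j : Fin n => lam j = lam ⟨i, by omega⟩)).card)
    (hk1 : 1 ≤ k) :
    (∀ ξ : Fin n → ℝ, (C (lam ⟨i, by omega⟩) - X) ^ (k - 1) ∣ IPoly n lam ξ) ∧
    (∀ ξ : Fin n → ℝ,
      (IPoly n lam ξ / (C (lam ⟨i, by omega⟩) - X) ^ (k - 1)).eval (lam ⟨i, by omega⟩) =
        (∏ l ∈ Finset.univ.filter (fun l : Fin n => lam l ≠ lam ⟨i, by omega⟩),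
            (lam l - lam ⟨i, by omega⟩)) *
          ∑ j ∈ Finset.univ.filter (fun j : Fin n => lam j = lam ⟨i, by omega⟩), (ξ j) ^ 2) ∧
    (∃ ξ : Fin n → ℝ,
      (IPoly n lam ξ / (C (lam ⟨i, by omega⟩) - X) ^ (k - 1)).eval (lam ⟨i, by omega⟩) ≠ 0) := by
  set i0 : Fin n := ⟨i, by omega⟩ with hi0
  set μ : ℝ := lam i0 with hμ
  set p : Polynomial ℝ := C μ - X with hp
  have hpne : p ≠ 0 := by
    intro h
    have h2 : p.eval (μ - 1) = 0 := by rw [h]; simp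
    simp [hp] at h2
  set S := Finset.univ.filter (fun j : Fin n => lam j = μ) with hS
  set T := Finset.univ.filter (fun l : Fin n => lam l ≠ μ) with hT
  set Q : Polynomial ℝ := ∏ l ∈ T, (C (lam l) - X) with hQ
  set Qf : Fin n → Polynomial ℝ := fun j => ∏ l ∈ T.erase j, (C (lam l) - X) with hQf
  have hi0S : i0 ∈ S := by simp [hS]; rfl
  have hkcard : S.card = k := hk.symm
  -- factorization of PiPoly for j ∈ S
  have hA : ∀ j ∈ S, PiPoly n lam j = p ^ (k - 1) * Q := by
    intro j hj
    have hjμ : lam j = μ := by simpa [hS] using hj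
    rw [PiPoly, ← Finset.prod_filter_mul_prod_filter_not (Finset.univ.erase j)
      (fun l => lam l = μ)]
    congr 1
    · have h1 : (Finset.univ.erase j).filter (fun l => lam l = μ) = S.erase j := by
        rw [hS, Finset.filter_erase]
      rw [h1]
      have h2 : ∀ l ∈ S.erase j, (C (lam l) - X : Polynomial ℝ) = p := by
        intro l hl
        have hl' : lam l = μ := by
          have := Finset.mem_of_mem_erase hl; simpa [hS] using this
        rw [hl', hp]
      rw [Finset.prod_congr rfl h2, Finset.prod_const, Finset.card_erase_of_mem hj, hkcard]
    · have h3 : (Finset.univ.erase j).filter (fun l => ¬ lam l = μ) = T := by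
        rw [hT, Finset.filter_erase, Finset.erase_eq_of_notMem]
        simp [hjμ]
      rw [h3]
  -- factorization of PiPoly for j ∉ S
  have hB : ∀ j ∈ T, PiPoly n lam j = p ^ (k - 1) * (p * Qf j) := by
    intro j hj
    have hjμ : lam j ≠ μ := by simpa [hT] using hj
    have hpk : p ^ k = p ^ (k - 1) * p := by
      rw [← pow_succ]; congr 1; omega
    rw [PiPoly, ← Finset.prod_filter_mul_prod_filter_not (Finset.univ.erase j)
      (fun l => lam l = μ)]
    have h1 : (Finset.univ.erase j).filter (fun l => lam l = μ) = S := by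
      rw [hS, Finset.filter_erase, Finset.erase_eq_of_notMem]
      simp [hjμ]
    have h2 : (Finset.univ.erase j).filter (fun l => ¬ lam l = μ) = T.erase j := by
      rw [hT, Finset.filter_erase]
    rw [h1, h2]
    have h3 : ∀ l ∈ S, (C (lam l) - X : Polynomial ℝ) = p := by
      intro l hl
      have hl' : lam l = μ := by simpa [hS] using hl
      rw [hl', hp]
    rw [Finset.prod_congr rfl h3, Finset.prod_const, hkcard, hpk, hQf]
    ring
  -- the quotient polynomial
  set R : (Fin n → ℝ) → Polynomial ℝ := fun ξ =>
    (∑ j ∈ S, C (ξ j ^ 2)) * Q + p * ∑ j ∈ T, C (ξ j ^ 2) * Qf j with hR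
  have hmain : ∀ ξ, IPoly n lam ξ = p ^ (k - 1) * R ξ := by
    intro ξ
    rw [IPoly, ← Finset.sum_filter_add_sum_filter_not Finset.univ (fun j : Fin n => lam j = μ)]
    have e1 : ∑ j ∈ S, C (ξ j ^ 2) * PiPoly n lam j
        = p ^ (k - 1) * ((∑ j ∈ S, C (ξ j ^ 2)) * Q) := by
      rw [Finset.sum_congr rfl (fun j hj => by rw [hA j hj]), ← Finset.sum_mul]
      ring
    have e2 : ∑ j ∈ T, C (ξ j ^ 2) * PiPoly n lam j
        = p ^ (k - 1) * (p * ∑ j ∈ T, C (ξ j ^ 2) * Qf j) := by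
      rw [Finset.sum_congr rfl (fun j hj => by rw [hB j hj]), Finset.mul_sum, Finset.mul_sum]
      exact Finset.sum_congr rfl fun j _ => by ring
    rw [show (Finset.univ.filter fun j : Fin n => lam j = μ) = S from rfl,
      show (Finset.univ.filter fun j : Fin n => ¬ lam j = μ) = T from rfl,
      e1, e2, hR]
    ring
  have hdiv : ∀ ξ, IPoly n lam ξ / p ^ (k - 1) = R ξ := by
    intro ξ
    rw [hmain ξ, mul_div_cancel_left₀ _ (pow_ne_zero _ hpne)]
  have heval : ∀ ξ, (IPoly n lam ξ / p ^ (k - 1)).eval μ =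
      (∏ l ∈ T, (lam l - μ)) * ∑ j ∈ S, ξ j ^ 2 := by
    intro ξ
    rw [hdiv ξ, hR]
    simp only [eval_add, eval_mul, eval_sum, eval_pow, eval_sub, eval_C, eval_X, eval_prod]
    have hpev : (μ : ℝ) - μ = 0 := by ring
    rw [hp]
    simp only [eval_sub, eval_C, eval_X, hpev, zero_mul, add_zero]
    rw [hQ]
    simp only [eval_prod, eval_sub, eval_C, eval_X]
    rw [eval_finset_sum]
    simp only [eval_C]
    ring
  refine ⟨fun ξ => ⟨R ξ, hmain ξ⟩, fun ξ => heval ξ, ?_⟩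
  refine ⟨fun j => if j = i0 then 1 else 0, ?_⟩
  rw [heval]
  have hsum : (∑ j ∈ S, (if j = i0 then (1:ℝ) else 0) ^ 2) = 1 := by
    rw [Finset.sum_congr rfl (fun j _ => by
      by_cases h : j = i0 <;> simp [h] : ∀ j ∈ S,
        (if j = i0 then (1:ℝ) else 0) ^ 2 = if j = i0 then 1 else 0)]
    rw [Finset.sum_ite_eq' S i0 (fun _ => (1:ℝ))]
    simp [hi0S]
  rw [hsum, mul_one]
  apply Finset.prod_ne_zero_iff.mpr
  intro l hl
  have : lam l ≠ μ := by simpa [hT] using hl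
  exact sub_ne_zero_of_ne this
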